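/- For every integer x ≥ 4 with x ≡ 2 or 4 (mod 6), the graph C_{(6:x)} admits a C_{2x}-factorization. -/

import Mathlib

/-- `E` is a `C_m`-factor: in the graph with edge set `E`, every vertex has exactly
two neighbours and every connected component has exactly `m` vertices, i.e. the
graph is a spanning 2-regular graph all of whose components are cycles of length `m`. -/
def IsCycleFactor {V : Type*} (E : Set (Sym2 V)) (m : ℕ) : Prop :=
  (∀ a : V, {b | (SimpleGraph.fromEdgeSet E).Adj a b}.ncard = 2) ∧
  (∀ a : V, {b | (SimpleGraph.fromEdgeSet E).Reachable a b}.ncard = m)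

/-- A `C_m`-factorization of `G`: a partition of the edge set of `G` into
`C_m`-factors. -/
def HasCycleFactorization {V : Type*} (G : SimpleGraph V) (m : ℕ) : Prop :=
  ∃ (n : ℕ) (P : Fin n → Set (Sym2 V)),
    (∀ i, P i ⊆ G.edgeSet) ∧
    (∀ e ∈ G.edgeSet, ∃! i, e ∈ P i) ∧
    (∀ i, IsCycleFactor (P i) m)

/-- The complete equipartite graph `K_{(h:u)}` with `u` parts of size `h`:
two vertices are adjacent iff they lie in different parts. -/
def completeEquipartite (h u : ℕ) : SimpleGraph (Fin u × Fin h) :=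
  SimpleGraph.fromRel (fun p q => p.1 ≠ q.1)

/-- The graph `C_{(w:a)}` obtained from the cycle of length `a` by blowing each
vertex up into `w` vertices: `(u, i)` and `(v, j)` are adjacent iff `u` and `v`
are adjacent on the `a`-cycle. -/
def cycleBlowup (w a : ℕ) : SimpleGraph (ZMod a × Fin w) :=
  SimpleGraph.fromRel (fun p q => p.1 = q.1 + 1)

namespace CBF

def toZ (k : Fin 6) : ZMod 6 := k
def toF (k : ZMod 6) : Fin 6 := k

/-- the constant `3 - x` in `ZMod 6`. -/
def cc (x : ℕ) : ZMod 6 := if x % 6 = 2 then 1 else 5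

/-- the matching permutation used between layer `u` and `u+1` in factor `i`. -/
def tau (x : ℕ) (i : ZMod 6) (u : ZMod x) : ZMod 6 :=
  if u = 0 then cc x * i else if u = 1 then 3 - i else i

/-- one step to the right along factor `i`. -/
def rstep (x : ℕ) (i : ZMod 6) (p : ZMod x × Fin 6) : ZMod x × Fin 6 :=
  (p.1 + 1, toF (toZ p.2 + tau x i p.1))

def lstep (x : ℕ) (i : ZMod 6) (p : ZMod x × Fin 6) : ZMod x × Fin 6 :=
  (p.1 - 1, toF (toZ p.2 - tau x i (p.1 - 1)))

/-- factor `i`. -/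
def P (x : ℕ) (i : ZMod 6) : Set (Sym2 (ZMod x × Fin 6)) :=
  { e | ∃ p : ZMod x × Fin 6, e = s(p, rstep x i p) }

def m3 (k : ZMod 6) : ZMod 3 := (k.val : ZMod 3)

def g (x : ℕ) (i : ZMod 6) (v : ZMod x) : ZMod 3 :=
  if v = 0 then 0 else if v = 1 then m3 (cc x) * m3 i
  else (m3 (cc x) + (v.val : ZMod 3)) * m3 i

def phi (x : ℕ) (i : ZMod 6) (p : ZMod x × Fin 6) : ZMod 3 := m3 (toZ p.2) - g x i p.1

def sig (x : ℕ) (i : ZMod 6) (t : ℕ) : ZMod 6 :=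
  if t = 0 then 0 else if t = 1 then cc x * i
  else cc x * i + (3 - i) + (((t : ℕ) : ZMod 6) - 2) * i

section facts
variable {x : ℕ} (hx : 4 ≤ x)

lemma cast_eq_zero_iff {a : ℕ} (ha : a < x) : ((a : ℕ) : ZMod x) = 0 ↔ a = 0 := by
  haveI : NeZero x := ⟨by omega⟩
  constructor
  · intro h
    have := congrArg ZMod.val h
    rwa [ZMod.val_cast_of_lt ha, ZMod.val_zero] at this
  · rintro rfl; simp

include hx

lemma one_ne_zero' : (1 : ZMod x) ≠ 0 := by
  have := cast_eq_zero_iff (x := x) (a := 1) (by omega)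
  simpa using this

lemma two_ne_zero' : (2 : ZMod x) ≠ 0 := by
  have := cast_eq_zero_iff (x := x) (a := 2) (by omega)
  simpa using this

lemma ne_rstep (i : ZMod 6) (p : ZMod x × Fin 6) : p ≠ rstep x i p := by
  intro h
  have h1 : p.1 = p.1 + 1 := congrArg Prod.fst h
  exact one_ne_zero' hx ((left_eq_add (a := p.1) (b := (1:ZMod x))).mp h1)

lemma rstep_lstep (i : ZMod 6) (p : ZMod x × Fin 6) : rstep x i (lstep x i p) = p := by
  refine Prod.ext ?_ ?_
  · show p.1 - 1 + 1 = p.1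
    ring
  · show toF (toZ (toF (toZ p.2 - tau x i (p.1 - 1))) + tau x i (p.1 - 1)) = p.2
    show toF ((toZ p.2 - tau x i (p.1 - 1)) + tau x i (p.1 - 1)) = p.2
    have h : (toZ p.2 - tau x i (p.1 - 1)) + tau x i (p.1 - 1) = toZ p.2 := by ring
    rw [h]
    rfl

lemma eq_rstep_iff (i : ZMod 6) (a b : ZMod x × Fin 6) :
    a = rstep x i b ↔ b = lstep x i a := by
  constructor
  · rintro rfl
    refine Prod.ext ?_ ?_
    · show b.1 = b.1 + 1 - 1
      ring
    · have h1 : (rstep x i b).1 - 1 = b.1 := by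
        show b.1 + 1 - 1 = b.1
        ring
      show b.2 = toF (toZ (rstep x i b).2 - tau x i ((rstep x i b).1 - 1))
      rw [h1]
      show b.2 = toF (toZ (toF (toZ b.2 + tau x i b.1)) - tau x i b.1)
      show b.2 = toF ((toZ b.2 + tau x i b.1) - tau x i b.1)
      have h : (toZ b.2 + tau x i b.1) - tau x i b.1 = toZ b.2 := by ring
      rw [h]
      rfl
  · rintro rfl
    exact (rstep_lstep hx i a).symm

lemma mem_P_iff (i : ZMod 6) (a b : ZMod x × Fin 6) :
    s(a, b) ∈ P x i ↔ b = rstep x i a ∨ a = rstep x i b := by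
  constructor
  · rintro ⟨p, hp⟩
    rw [Sym2.eq_iff] at hp
    rcases hp with ⟨rfl, rfl⟩ | ⟨rfl, rfl⟩
    · exact Or.inl rfl
    · exact Or.inr rfl
  · rintro (rfl | rfl)
    · exact ⟨a, rfl⟩
    · exact ⟨b, Sym2.eq_swap⟩

lemma P_subset (i : ZMod 6) : P x i ⊆ (cycleBlowup 6 x).edgeSet := by
  rintro e ⟨p, rfl⟩
  rw [SimpleGraph.mem_edgeSet]
  refine ⟨ne_rstep hx i p, ?_⟩
  right
  show (rstep x i p).1 = p.1 + 1
  rfl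

lemma adj_iff (i : ZMod 6) (a b : ZMod x × Fin 6) :
    (SimpleGraph.fromEdgeSet (P x i)).Adj a b ↔
      (b = rstep x i a ∨ a = rstep x i b) ∧ a ≠ b := by
  rw [SimpleGraph.fromEdgeSet_adj, mem_P_iff hx]

lemma reach_rstep (i : ZMod 6) (p : ZMod x × Fin 6) :
    (SimpleGraph.fromEdgeSet (P x i)).Reachable p (rstep x i p) := by
  refine SimpleGraph.Adj.reachable ?_
  rw [adj_iff hx]
  exact ⟨Or.inl rfl, ne_rstep hx i p⟩

lemma reach_iter (i : ZMod 6) (p : ZMod x × Fin 6) (t : ℕ) :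
    (SimpleGraph.fromEdgeSet (P x i)).Reachable p ((rstep x i)^[t] p) := by
  induction t with
  | zero => exact SimpleGraph.Reachable.refl p
  | succ n ih =>
    rw [Function.iterate_succ_apply']
    exact ih.trans (reach_rstep hx i _)


lemma tau_at_zero (i : ZMod 6) : tau x i 0 = cc x * i := by simp [tau]

lemma tau_at_one (i : ZMod 6) : tau x i (1 : ZMod x) = 3 - i := by
  have h := one_ne_zero' hx
  simp [tau, h]

lemma tau_generic (i : ZMod 6) {u : ZMod x} (h0 : u ≠ 0) (h1 : u ≠ 1) :
    tau x i u = i := by simp [tau, h0, h1]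

lemma sig_zero (i : ZMod 6) : sig x i 0 = 0 := by simp [sig]

lemma sig_one (i : ZMod 6) : sig x i 1 = cc x * i := by simp [sig]

lemma sig_two (i : ZMod 6) : sig x i 2 = cc x * i + (3 - i) := by
  have h2 : ((2 : ℕ) : ZMod 6) = 2 := by norm_num
  simp [sig, h2]

lemma sig_succ (i : ZMod 6) {n : ℕ} (hn : 2 ≤ n) :
    sig x i (n + 1) = sig x i n + i := by
  simp only [sig, if_neg (by omega : ¬ n + 1 = 0), if_neg (by omega : ¬ n + 1 = 1),
    if_neg (by omega : ¬ n = 0), if_neg (by omega : ¬ n = 1)]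
  push_cast
  ring


lemma rstep_ne_lstep (i : ZMod 6) (a : ZMod x × Fin 6) : rstep x i a ≠ lstep x i a := by
  intro h
  have h1 : a.1 + 1 = a.1 - 1 := congrArg Prod.fst h
  exact two_ne_zero' hx (by linear_combination h1)

lemma ne_lstep (i : ZMod 6) (a : ZMod x × Fin 6) : a ≠ lstep x i a := by
  intro h
  have h2 := rstep_lstep hx i a
  rw [← h] at h2
  exact ne_rstep hx i a h2.symm

lemma neighbors_eq (i : ZMod 6) (a : ZMod x × Fin 6) :
    {b | (SimpleGraph.fromEdgeSet (P x i)).Adj a b} = {rstep x i a, lstep x i a} := by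
  ext b
  simp only [Set.mem_setOf_eq, Set.mem_insert_iff, Set.mem_singleton_iff]
  rw [adj_iff hx]
  constructor
  · rintro ⟨h | h, hne⟩
    · exact Or.inl h
    · exact Or.inr ((eq_rstep_iff hx i a b).mp h)
  · rintro (rfl | rfl)
    · exact ⟨Or.inl rfl, ne_rstep hx i a⟩
    · exact ⟨Or.inr ((eq_rstep_iff hx i a (lstep x i a)).mpr rfl), ne_lstep hx i a⟩

lemma degree_two (i : ZMod 6) (a : ZMod x × Fin 6) :
    {b | (SimpleGraph.fromEdgeSet (P x i)).Adj a b}.ncard = 2 := by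
  rw [neighbors_eq hx i a]
  exact Set.ncard_pair (rstep_ne_lstep hx i a)

end facts

section hmodfacts
variable {x : ℕ} (hx : 4 ≤ x) (hmod : x % 6 = 2 ∨ x % 6 = 4)
include hmod

lemma cc_sq : ∀ i : ZMod 6, cc x * (cc x * i) = i := by
  rcases hmod with h | h <;> simp only [cc, h] <;> decide

include hx

lemma tau_invol (i : ZMod 6) (u : ZMod x) : tau x (tau x i u) u = i := by
  by_cases h0 : u = 0
  · simp only [tau, if_pos h0]
    exact cc_sq hmod i
  · by_cases h1 : u = 1
    · simp only [tau, if_neg h0, if_pos h1]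
      ring
    · simp only [tau, if_neg h0, if_neg h1]

lemma tau_inj {i i' : ZMod 6} (u : ZMod x) (h : tau x i u = tau x i' u) : i = i' := by
  have := congrArg (fun z => tau x z u) h
  rw [tau_invol hx hmod, tau_invol hx hmod] at this
  exact this

lemma g_step (i : ZMod 6) (v : ZMod x) :
    g x i (v + 1) = g x i v + m3 (tau x i v) := by
  haveI : NeZero x := ⟨by omega⟩
  haveI : Fact (1 < x) := ⟨by omega⟩
  have hm3mul : ∀ a b : ZMod 6, m3 (a * b) = m3 a * m3 b := by decide
  have hm3sub3 : ∀ a : ZMod 6, m3 (3 - a) = - m3 a := by decide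
  have h1ne0 : (1 : ZMod x) ≠ 0 := one_ne_zero' hx
  by_cases h0 : v = 0
  · subst h0
    have h10 : (0 + 1 : ZMod x) = 1 := by ring
    rw [h10]
    simp only [g, tau, if_pos rfl, if_neg h1ne0, if_true, eq_self_iff_true]
    rw [hm3mul]
    ring
  · by_cases h1 : v = 1
    · subst h1
      have h2 : (1 + 1 : ZMod x) = 2 := by ring
      rw [h2]
      have h20 : (2 : ZMod x) ≠ 0 := two_ne_zero' hx
      have h21 : (2 : ZMod x) ≠ 1 := by
        intro h
        exact one_ne_zero' hx (by linear_combination h)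
      have hval2 : (2 : ZMod x).val = 2 := by
        have : ((2 : ℕ) : ZMod x).val = 2 := ZMod.val_cast_of_lt (by omega)
        simpa using this
      simp only [g, tau, if_neg h20, if_neg h21, if_neg h1ne0, if_pos rfl, hval2, if_true, eq_self_iff_true]
      rw [hm3sub3]
      have h23 : ((2 : ℕ) : ZMod 3) = -1 := by decide
      rw [h23]
      ring
    · by_cases hlast : v = -1
      · subst hlast
        have hne0 : (-1 : ZMod x) ≠ 0 := by
          intro h
          exact one_ne_zero' hx (by linear_combination -h)
        have hne1 : (-1 : ZMod x) ≠ 1 := by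
          intro h
          exact two_ne_zero' hx (by linear_combination -h)
        have hadd : (-1 + 1 : ZMod x) = 0 := by ring
        rw [hadd]
        have hvalneg1 : (-1 : ZMod x).val = x - 1 := by
          obtain ⟨y, rfl⟩ : ∃ y, x = y + 1 := ⟨x - 1, by omega⟩
          simpa using ZMod.val_neg_one y
        simp only [g, tau, if_pos rfl, if_neg hne0, if_neg hne1, hvalneg1, if_true, eq_self_iff_true]
        have hx1 : ((x - 1 : ℕ) : ZMod 3) = ((x : ℕ) : ZMod 3) - 1 := by
          have h' : (x - 1) + 1 = x := by omega
          have h'' := congrArg (fun a : ℕ => ((a : ℕ) : ZMod 3)) h'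
          push_cast at h''
          linear_combination h''
        rw [hx1]
        have hkey : m3 (cc x) + ((x : ℕ) : ZMod 3) = 0 := by
          rcases hmod with h | h
          · have : ((x : ℕ) : ZMod 3) = ((x % 3 : ℕ) : ZMod 3) := (ZMod.natCast_mod x 3).symm
            rw [this, show x % 3 = 2 by omega, cc, if_pos h]
            decide
          · have : ((x : ℕ) : ZMod 3) = ((x % 3 : ℕ) : ZMod 3) := (ZMod.natCast_mod x 3).symm
            rw [this, show x % 3 = 1 by omega, cc, if_neg (by omega)]
            decide
        linear_combination (-(m3 i)) * hkey
      · -- generic case : v ∉ {0, 1, -1}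
        have hvne0 : v + 1 ≠ 0 := by
          intro h
          exact hlast (by linear_combination h)
        have hvne1 : v + 1 ≠ 1 := by
          intro h
          exact h0 (by linear_combination h)
        have hval1 : (1 : ZMod x).val = 1 := ZMod.val_one x
        have hvlt : v.val < x - 1 := by
          have hlt := ZMod.val_lt v
          rcases lt_or_eq_of_le (Nat.le_of_lt_succ (by omega : v.val < (x - 1) + 1)) with h | h
          · exact h
          · exfalso
            apply hlast
            apply ZMod.val_injective x
            rw [h]
            obtain ⟨y, rfl⟩ : ∃ y, x = y + 1 := ⟨x - 1, by omega⟩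
            simpa using (ZMod.val_neg_one y).symm
        have hvaladd : (v + 1).val = v.val + 1 := by
          rw [ZMod.val_add_of_lt]
          · rw [hval1]
          · rw [hval1]; omega
        simp only [g, tau, if_neg h0, if_neg h1, if_neg hvne0, if_neg hvne1, hvaladd]
        push_cast
        ring

lemma phi_rstep (i : ZMod 6) (p : ZMod x × Fin 6) :
    phi x i (rstep x i p) = phi x i p := by
  have hm3add : ∀ a b : ZMod 6, m3 (a + b) = m3 a + m3 b := by decide
  show m3 (toZ (toF (toZ p.2 + tau x i p.1))) - g x i (p.1 + 1) = m3 (toZ p.2) - g x i p.1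
  show m3 (toZ p.2 + tau x i p.1) - g x i (p.1 + 1) = m3 (toZ p.2) - g x i p.1
  rw [hm3add, g_step hx hmod]
  ring

lemma reachable_phi (i : ZMod 6) {a b : ZMod x × Fin 6}
    (h : (SimpleGraph.fromEdgeSet (P x i)).Reachable a b) : phi x i a = phi x i b := by
  obtain ⟨w⟩ := h
  induction w with
  | nil => rfl
  | cons hadj _ ih =>
    rename_i u v w
    rw [adj_iff hx] at hadj
    rcases hadj.1 with h' | h'
    · rw [← ih, h', phi_rstep hx hmod]
    · rw [← ih, h', phi_rstep hx hmod]

lemma iter_formula (i : ZMod 6) (d : ZMod 6) :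
    ∀ t, t ≤ x → (rstep x i)^[t] ((0 : ZMod x), toF d) = (((t : ℕ) : ZMod x), toF (d + sig x i t)) := by
  haveI : NeZero x := ⟨by omega⟩
  intro t
  induction t with
  | zero =>
    intro _
    rw [sig_zero hx i, add_zero]
    simp
  | succ n ih =>
    intro hn
    have hnx : n < x := by omega
    rw [Function.iterate_succ_apply', ih (by omega)]
    refine Prod.ext ?_ ?_
    · show ((n : ℕ) : ZMod x) + 1 = (((n+1 : ℕ)) : ZMod x)
      push_cast
      ring
    · show toF (toZ (toF (d + sig x i n)) + tau x i ((n : ℕ) : ZMod x)) = toF (d + sig x i (n+1))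
      show toF ((d + sig x i n) + tau x i ((n : ℕ) : ZMod x)) = toF (d + sig x i (n+1))
      congr 1
      rcases Nat.lt_or_ge n 1 with h | h
      · have hn0 : n = 0 := by omega
        subst hn0
        rw [Nat.cast_zero, tau_at_zero hx i, sig_zero hx i, sig_one hx i]
        ring
      · rcases Nat.lt_or_ge n 2 with h2 | h2
        · have hn1 : n = 1 := by omega
          subst hn1
          rw [Nat.cast_one, tau_at_one hx i, sig_one hx i, sig_two hx i]
          ring
        · have hne0 : ((n : ℕ) : ZMod x) ≠ 0 := by
            intro hh
            exact absurd ((cast_eq_zero_iff hnx).mp hh) (by omega)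
          have hne1 : ((n : ℕ) : ZMod x) ≠ 1 := by
            intro hh
            haveI : Fact (1 < x) := ⟨by omega⟩
            have : ((n : ℕ) : ZMod x).val = 1 := by rw [hh]; exact ZMod.val_one x
            rw [ZMod.val_cast_of_lt hnx] at this
            omega
          rw [tau_generic hx i hne0 hne1, sig_succ hx i h2]
          ring

lemma loop_formula (i : ZMod 6) (d : ZMod 6) :
    (rstep x i)^[x] ((0 : ZMod x), toF d) = ((0 : ZMod x), toF (d + 3)) := by
  haveI : NeZero x := ⟨by omega⟩
  rw [iter_formula hx hmod i d x le_rfl]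
  refine Prod.ext ?_ ?_
  · show ((x : ℕ) : ZMod x) = 0
    exact ZMod.natCast_self x
  · show toF (d + sig x i x) = toF (d + 3)
    congr 1
    have hsig : sig x i x = 3 := by
      have hx6 : ((x : ℕ) : ZMod 6) = ((x % 6 : ℕ) : ZMod 6) := (ZMod.natCast_mod x 6).symm
      rcases hmod with h | h
      · simp only [sig, if_neg (by omega : ¬ x = 0), if_neg (by omega : ¬ x = 1),
          cc, if_pos h, hx6, h]
        push_cast
        ring
      · simp only [sig, if_neg (by omega : ¬ x = 0), if_neg (by omega : ¬ x = 1),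
          cc, if_neg (by omega : ¬ x % 6 = 2), hx6, h]
        have h6 : (6 : ZMod 6) = 0 := by decide
        push_cast
        linear_combination i * h6
    rw [hsig]


def dd (x : ℕ) (i : ZMod 6) (p : ZMod x × Fin 6) : ZMod 6 := toZ p.2 - sig x i p.1.val

lemma reach_dd (i : ZMod 6) (p : ZMod x × Fin 6) :
    (SimpleGraph.fromEdgeSet (P x i)).Reachable ((0 : ZMod x), toF (dd x i p)) p := by
  haveI : NeZero x := ⟨by omega⟩
  have h := iter_formula hx hmod i (dd x i p) p.1.val (le_of_lt (ZMod.val_lt p.1))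
  have h2 : ((rstep x i)^[p.1.val] ((0 : ZMod x), toF (dd x i p))) = p := by
    rw [h]
    refine Prod.ext ?_ ?_
    · exact ZMod.natCast_zmod_val p.1
    · show toF (dd x i p + sig x i p.1.val) = p.2
      have h3 : dd x i p + sig x i p.1.val = toZ p.2 := by
        unfold dd
        ring
      rw [h3]
      rfl
  have h4 := reach_iter hx i ((0 : ZMod x), toF (dd x i p)) p.1.val
  rwa [h2] at h4

lemma reach_three (i : ZMod 6) (d : ZMod 6) :
    (SimpleGraph.fromEdgeSet (P x i)).Reachable ((0 : ZMod x), toF d) ((0 : ZMod x), toF (d + 3)) := by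
  rw [← loop_formula hx hmod i d]
  exact reach_iter hx i _ _

lemma phi_zero (i : ZMod 6) (d : ZMod 6) : phi x i ((0 : ZMod x), toF d) = m3 d := by
  show m3 (toZ (toF d)) - g x i 0 = m3 d
  show m3 d - g x i 0 = m3 d
  rw [g, if_pos rfl, sub_zero]

lemma component_eq_fiber (i : ZMod 6) (a : ZMod x × Fin 6) :
    {b | (SimpleGraph.fromEdgeSet (P x i)).Reachable a b} = {b | phi x i b = phi x i a} := by
  have m3_fiber : ∀ a b : ZMod 6, m3 a = m3 b → b = a ∨ b = a + 3 := by decide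
  ext b
  simp only [Set.mem_setOf_eq]
  constructor
  · intro hb
    exact (reachable_phi hx hmod i hb).symm
  · intro hb
    have h1 := reach_dd hx hmod i a
    have h2 := reach_dd hx hmod i b
    have ha : m3 (dd x i a) = phi x i a := by
      rw [← phi_zero hx hmod i (dd x i a)]
      exact reachable_phi hx hmod i h1
    have hbb : m3 (dd x i b) = phi x i b := by
      rw [← phi_zero hx hmod i (dd x i b)]
      exact reachable_phi hx hmod i h2
    have hm : m3 (dd x i a) = m3 (dd x i b) := by rw [ha, hbb, hb]
    rcases m3_fiber _ _ hm with h | h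
    · rw [h] at h2
      exact (h1.symm.trans h2)
    · rw [h] at h2
      exact h1.symm.trans ((reach_three hx hmod i (dd x i a)).trans h2)

def enc (d : ZMod 3) (b : Fin 2) : ZMod 6 := ((d.val + 3 * b.val : ℕ) : ZMod 6)

def dec (k : ZMod 6) : Fin 2 := if k.val < 3 then 0 else 1

lemma fiber_ncard (i : ZMod 6) (c : ZMod 3) :
    {b : ZMod x × Fin 6 | phi x i b = c}.ncard = 2 * x := by
  haveI : NeZero x := ⟨by omega⟩
  have m3_enc : ∀ d b, m3 (enc d b) = d := by decide
  have dec_enc : ∀ d b, dec (enc d b) = b := by decide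
  have enc_m3_dec : ∀ k, enc (m3 k) (dec k) = k := by decide
  have e : {b : ZMod x × Fin 6 // phi x i b = c} ≃ ZMod x × Fin 2 :=
    { toFun := fun q => (q.1.1, dec (toZ q.1.2))
      invFun := fun vb => ⟨(vb.1, toF (enc (c + g x i vb.1) vb.2)), by
        show m3 (toZ (toF (enc (c + g x i vb.1) vb.2))) - g x i vb.1 = c
        show m3 (enc (c + g x i vb.1) vb.2) - g x i vb.1 = c
        rw [m3_enc]
        ring⟩
      left_inv := by
        rintro ⟨⟨v, k⟩, hq⟩
        have hq' : c + g x i v = m3 (toZ k) := by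
          have : m3 (toZ k) - g x i v = c := hq
          linear_combination -this
        refine Subtype.ext (Prod.ext rfl ?_)
        show toF (enc (c + g x i v) (dec (toZ k))) = k
        rw [hq', enc_m3_dec]
        rfl
      right_inv := by
        rintro ⟨v, b⟩
        refine Prod.ext rfl ?_
        show dec (toZ (toF (enc (c + g x i v) b))) = b
        show dec (enc (c + g x i v) b) = b
        rw [dec_enc] }
  rw [← Nat.card_coe_set_eq]
  have : Nat.card {b : ZMod x × Fin 6 | phi x i b = c} = Nat.card (ZMod x × Fin 2) :=
    Nat.card_congr e
  rw [this, Nat.card_prod, Nat.card_zmod, Nat.card_eq_fintype_card, Fintype.card_fin]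
  ring


lemma exists_unique_factor (a b : ZMod x × Fin 6) (h : b.1 = a.1 + 1) :
    ∃! i : ZMod 6, s(a, b) ∈ P x i := by
  refine ⟨tau x (toZ b.2 - toZ a.2) a.1, ?_, ?_⟩
  · show s(a, b) ∈ P x (tau x (toZ b.2 - toZ a.2) a.1)
    rw [mem_P_iff hx]
    left
    refine Prod.ext h ?_
    show b.2 = toF (toZ a.2 + tau x (tau x (toZ b.2 - toZ a.2) a.1) a.1)
    rw [tau_invol hx hmod]
    have h2 : toZ a.2 + (toZ b.2 - toZ a.2) = toZ b.2 := by ring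
    rw [h2]
    rfl
  · intro i' hi'
    have hi'' : s(a, b) ∈ P x i' := hi'
    rw [mem_P_iff hx] at hi''
    rcases hi'' with h' | h'
    · have h2 : toZ b.2 = toZ a.2 + tau x i' a.1 := by
        have := congrArg (fun p => toZ p.2) h'
        exact this
      apply tau_inj hx hmod a.1
      rw [h2]
      have h3 : toZ a.2 + tau x i' a.1 - toZ a.2 = tau x i' a.1 := by ring
      rw [h3, tau_invol hx hmod]
    · exfalso
      have h2 : a.1 = b.1 + 1 := congrArg Prod.fst h'
      rw [h] at h2
      exact two_ne_zero' hx (by linear_combination -h2)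

end hmodfacts

end CBF

theorem cycleBlowup_six_factorization (x : ℕ) (hx : 4 ≤ x)
    (hmod : x % 6 = 2 ∨ x % 6 = 4) :
    HasCycleFactorization (cycleBlowup 6 x) (2 * x) := by
  refine ⟨6, fun i => CBF.P x (CBF.toZ i), fun i => CBF.P_subset hx _, ?_, ?_⟩
  · intro e he
    revert he
    refine Sym2.ind (fun a b => ?_) e
    intro hab
    rw [SimpleGraph.mem_edgeSet] at hab
    rw [cycleBlowup, SimpleGraph.fromRel_adj] at hab
    have key : ∀ a b : ZMod x × Fin 6, b.1 = a.1 + 1 →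
        ∃! i : Fin 6, s(a, b) ∈ CBF.P x (CBF.toZ i) := by
      intro a b h
      obtain ⟨i₀, hmem, huniq⟩ := CBF.exists_unique_factor hx hmod a b h
      refine ⟨CBF.toF i₀, hmem, ?_⟩
      intro y hy
      exact congrArg CBF.toF (huniq (CBF.toZ y) hy)
    rcases hab.2 with h | h
    · have := key b a h
      simpa only [Sym2.eq_swap] using this
    · exact key a b h
  · intro i
    constructor
    · intro a
      exact CBF.degree_two hx (CBF.toZ i) a
    · intro a
      rw [CBF.component_eq_fiber hx hmod (CBF.toZ i) a]
      exact CBF.fiber_ncard hx hmod (CBF.toZ i) (CBF.phi x (CBF.toZ i) a)
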